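/- For every δ with 0 < δ < 1/2 there exists a sequence of probabilities p_i ∈ (0, 1/2) such that ∏_{i=1}^∞ (1 - p_i) > 1 - δ and ∑_{i=1}^∞ (-p_i log₂ p_i - (1-p_i) log₂(1-p_i)) = ∞. -/

import Mathlib

open Filter Real Finset

lemma one_lt_log_add_three (n : ℕ) : (1:ℝ) < Real.log (n+3) := by
  have h3 : (3:ℝ) ≤ (n:ℝ) + 3 := by
    have : (0:ℝ) ≤ n := Nat.cast_nonneg n
    linarith
  have h1 : (1:ℝ) < Real.log 3 := by
    rw [Real.lt_log_iff_exp_lt (by norm_num)]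
    calc Real.exp 1 < 2.7182818286 := Real.exp_one_lt_d9
      _ < 3 := by norm_num
  calc (1:ℝ) < Real.log 3 := h1
    _ ≤ Real.log ((n:ℝ)+3) := Real.log_le_log (by norm_num) h3

-- log(x+1) - log x ≥ 1/(x+1) for x > 0
lemma log_succ_sub_log_ge (x : ℝ) (hx : 0 < x) :
    1/(x+1) ≤ Real.log (x+1) - Real.log x := by
  have h1 : Real.log (x+1) - Real.log x = Real.log ((x+1)/x) := by
    rw [Real.log_div (by linarith) (by linarith)]
  rw [h1]
  have h2 := Real.one_sub_inv_le_log_of_pos (x := (x+1)/x) (by positivity)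
  have h3 : ((x+1)/x)⁻¹ = x/(x+1) := by rw [inv_div]
  rw [h3] at h2
  have : 1 - x/(x+1) = 1/(x+1) := by field_simp; ring
  linarith

-- log(x+1) - log x ≤ 1/x for x > 0
lemma log_succ_sub_log_le (x : ℝ) (hx : 0 < x) :
    Real.log (x+1) - Real.log x ≤ 1/x := by
  have h1 : Real.log (x+1) - Real.log x = Real.log ((x+1)/x) := by
    rw [Real.log_div (by linarith) (by linarith)]
  rw [h1]
  have h2 := Real.log_le_sub_one_of_pos (x := (x+1)/x) (by positivity)
  have : (x+1)/x - 1 = 1/x := by field_simp; ring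
  linarith

noncomputable def qq (n : ℕ) : ℝ := 1/(((n:ℝ)+3) * (Real.log ((n:ℝ)+3))^2)
noncomputable def rr (n : ℕ) : ℝ := 1/(((n:ℝ)+3) * Real.log ((n:ℝ)+3))
noncomputable def bb (n : ℕ) : ℝ := 1/Real.log ((n:ℝ)+3)
noncomputable def cc (n : ℕ) : ℝ := Real.log (Real.log ((n:ℝ)+3))

lemma qq_pos (n : ℕ) : 0 < qq n := by
  have := one_lt_log_add_three n
  unfold qq; positivity

lemma qq_step (n : ℕ) : qq (n+1) ≤ bb n - bb (n+1) := by
  have hl1 := one_lt_log_add_three n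
  have hl2 := one_lt_log_add_three (n+1)
  have hc : ((n+1:ℕ):ℝ) + 3 = ((n:ℝ)+3) + 1 := by push_cast; ring
  have hlog : 1/(((n:ℝ)+3)+1) ≤ Real.log (((n:ℝ)+3)+1) - Real.log ((n:ℝ)+3) :=
    log_succ_sub_log_ge _ (by positivity)
  have hmono : Real.log ((n:ℝ)+3) ≤ Real.log (((n:ℝ)+3)+1) :=
    Real.log_le_log (by positivity) (by linarith)
  unfold qq bb
  rw [hc] at *
  rw [div_sub_div _ _ (by linarith) (by linarith), div_le_div_iff₀ (by nlinarith) (by nlinarith)]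
  set A := Real.log ((n:ℝ)+3) with hA
  set B := Real.log (((n:ℝ)+3)+1) with hB
  set X := (n:ℝ)+3+1 with hX
  have hXpos : 0 < X := by positivity
  have h5 : 1/X * (X*B^2) = B^2 := by field_simp
  have h6 : 1/X * (X*B^2) ≤ (B - A) * (X*B^2) :=
    mul_le_mul_of_nonneg_right hlog (by positivity)
  have h7 : A*B ≤ B^2 := by nlinarith
  nlinarith

lemma qq_partial (N : ℕ) : ∑ i ∈ range N, qq i ≤ 2 := by
  have hb0 : bb 0 ≤ 1 := by
    unfold bb
    have := one_lt_log_add_three 0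
    rw [div_le_one (by norm_num at this ⊢; linarith)]
    norm_num at this ⊢; linarith
  have hq0 : qq 0 ≤ 1 := by
    have := one_lt_log_add_three 0
    unfold qq
    rw [div_le_one (by norm_num at this ⊢; nlinarith)]
    norm_num at this ⊢; nlinarith
  cases N with
  | zero => simp
  | succ n =>
    rw [Finset.sum_range_succ']
    have h1 : ∑ i ∈ range n, qq (i+1) ≤ ∑ i ∈ range n, (bb i - bb (i+1)) :=
      Finset.sum_le_sum fun i _ => qq_step i
    rw [Finset.sum_range_sub'] at h1
    have hbn : 0 ≤ bb n := by
      unfold bb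
      have := one_lt_log_add_three n
      positivity
    linarith

lemma qq_summable : Summable qq := summable_of_sum_range_le (fun n => (qq_pos n).le) qq_partial

lemma qq_tsum_le : ∑' n, qq n ≤ 2 := tsum_le_of_sum_range_le (fun n => (qq_pos n).le) qq_partial

lemma rr_pos (n : ℕ) : 0 < rr n := by
  have := one_lt_log_add_three n
  unfold rr; positivity

lemma cc_step (n : ℕ) : cc (n+1) - cc n ≤ rr n := by
  have hl1 := one_lt_log_add_three n
  have hl2 := one_lt_log_add_three (n+1)
  have hc : ((n+1:ℕ):ℝ) + 3 = ((n:ℝ)+3) + 1 := by push_cast; ring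
  have hlog : Real.log (((n:ℝ)+3)+1) - Real.log ((n:ℝ)+3) ≤ 1/((n:ℝ)+3) :=
    log_succ_sub_log_le _ (by positivity)
  unfold cc rr
  rw [hc] at *
  set A := Real.log ((n:ℝ)+3) with hA
  set B := Real.log (((n:ℝ)+3)+1) with hB
  have hAB : A ≤ B := by
    apply Real.log_le_log (by positivity); linarith
  have h1 : Real.log B - Real.log A = Real.log (B/A) := by
    rw [Real.log_div (by linarith) (by linarith)]
  rw [h1]
  have h2 : Real.log (B/A) ≤ B/A - 1 := Real.log_le_sub_one_of_pos (by
    apply div_pos <;> linarith)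
  have h3 : B/A - 1 = (B - A)/A := by field_simp
  have h4 : (B - A)/A ≤ (1/((n:ℝ)+3))/A := by
    gcongr
  have h5 : (1/((n:ℝ)+3))/A = 1/(((n:ℝ)+3)*A) := by field_simp
  linarith [h4, h2, h3.le, h5.le]

lemma cc_tendsto : Tendsto cc atTop atTop := by
  unfold cc
  apply Real.tendsto_log_atTop.comp
  apply Real.tendsto_log_atTop.comp
  apply tendsto_atTop_add_const_right
  exact tendsto_natCast_atTop_atTop

lemma rr_not_summable : ¬ Summable rr := by
  intro hs
  have hbound : ∀ N, cc N - cc 0 ≤ ∑' n, rr n := by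
    intro N
    have h1 : cc N - cc 0 = ∑ i ∈ range N, (cc (i+1) - cc i) := (Finset.sum_range_sub cc N).symm
    rw [h1]
    calc ∑ i ∈ range N, (cc (i+1) - cc i) ≤ ∑ i ∈ range N, rr i :=
          Finset.sum_le_sum fun i _ => cc_step i
      _ ≤ ∑' n, rr n := Summable.sum_le_tsum _ (fun i _ => (rr_pos i).le) hs
  obtain ⟨N, hN⟩ := (tendsto_atTop.mp cc_tendsto (∑' n, rr n + cc 0 + 1)).exists
  have := hbound N
  linarith

lemma qq_le_one (n : ℕ) : qq n ≤ 1 := by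
  have h := one_lt_log_add_three n
  have hn : (3:ℝ) ≤ (n:ℝ)+3 := by
    have : (0:ℝ) ≤ n := Nat.cast_nonneg n
    linarith
  unfold qq
  rw [div_le_one (by nlinarith)]
  nlinarith

lemma qq_mul_log (n : ℕ) : qq n * Real.log ((n:ℝ)+3) = rr n := by
  have h := one_lt_log_add_three n
  unfold qq rr
  field_simp

lemma weierstrass (p : ℕ → ℝ) (h : ∀ i, 0 ≤ p i ∧ p i ≤ 1) (N : ℕ) :
    1 - ∑ i ∈ range N, p i ≤ ∏ i ∈ range N, (1 - p i) := by
  induction N with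
  | zero => simp
  | succ n ih =>
    rw [Finset.sum_range_succ, Finset.prod_range_succ]
    have h1 : 0 ≤ 1 - p n := by linarith [(h n).2]
    have h2 : (1 - ∑ i ∈ range n, p i) * (1 - p n) ≤ (∏ i ∈ range n, (1 - p i)) * (1 - p n) :=
      mul_le_mul_of_nonneg_right ih h1
    have hsum : 0 ≤ ∑ i ∈ range n, p i := Finset.sum_nonneg fun i _ => (h i).1
    nlinarith [(h n).1]

theorem exists_seq_prod_large_entropy_diverges (δ : ℝ) (hδ0 : 0 < δ) (hδ1 : δ < 1 / 2) :
    ∃ p : ℕ → ℝ,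
      (∀ i, 0 < p i ∧ p i < 1 / 2) ∧
      (∃ L : ℝ, L > 1 - δ ∧
        Tendsto (fun n => ∏ i ∈ Finset.range n, (1 - p i)) atTop (nhds L)) ∧
      ¬ Summable (fun i =>
          - p i * Real.logb 2 (p i) - (1 - p i) * Real.logb 2 (1 - p i)) := by
  set ε := δ/4 with hε
  have hε0 : 0 < ε := by positivity
  have hε1 : ε < 1/8 := by linarith
  set p : ℕ → ℝ := fun n => ε * qq n with hp
  have hp0 : ∀ n, 0 < p n := fun n => mul_pos hε0 (qq_pos n)
  have hple : ∀ n, p n ≤ ε := by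
    intro n
    calc p n = ε * qq n := rfl
      _ ≤ ε * 1 := mul_le_mul_of_nonneg_left (qq_le_one n) hε0.le
      _ = ε := mul_one ε
  have hphalf : ∀ n, p n < 1/2 := fun n => lt_of_le_of_lt (hple n) (by linarith)
  refine ⟨p, fun i => ⟨hp0 i, hphalf i⟩, ?_, ?_⟩
  · -- product part
    have hsum : ∀ N, ∑ i ∈ range N, p i ≤ δ/2 := by
      intro N
      have : ∑ i ∈ range N, p i = ε * ∑ i ∈ range N, qq i := by
        rw [Finset.mul_sum]
      rw [this]
      calc ε * ∑ i ∈ range N, qq i ≤ ε * 2 := mul_le_mul_of_nonneg_left (qq_partial N) hε0.le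
        _ = δ/2 := by rw [hε]; ring
    have hlb : ∀ N, 1 - δ/2 ≤ ∏ i ∈ range N, (1 - p i) := by
      intro N
      have := weierstrass p (fun i => ⟨(hp0 i).le, by linarith [hphalf i]⟩) N
      linarith [hsum N]
    have hanti : Antitone (fun n => ∏ i ∈ Finset.range n, (1 - p i)) := by
      apply antitone_nat_of_succ_le
      intro n
      rw [Finset.prod_range_succ]
      have hprodpos : 0 ≤ ∏ i ∈ range n, (1 - p i) :=
        Finset.prod_nonneg fun i _ => by linarith [hphalf i]
      nlinarith [hp0 n]
    have hbdd : BddBelow (Set.range fun n => ∏ i ∈ Finset.range n, (1 - p i)) :=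
      ⟨1 - δ/2, by rintro x ⟨N, rfl⟩; exact hlb N⟩
    refine ⟨⨅ n, ∏ i ∈ Finset.range n, (1 - p i), ?_, tendsto_atTop_ciInf hanti hbdd⟩
    have : 1 - δ/2 ≤ ⨅ n, ∏ i ∈ Finset.range n, (1 - p i) := le_ciInf hlb
    linarith
  · -- entropy part
    intro hS
    have hlog2 : 0 < Real.log 2 := Real.log_pos (by norm_num)
    set c := ε / Real.log 2 with hc
    have hc0 : 0 < c := by positivity
    have hkey : ∀ n, c * rr n ≤
        - p n * Real.logb 2 (p n) - (1 - p n) * Real.logb 2 (1 - p n) := by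
      intro n
      have hL := one_lt_log_add_three n
      have hn3 : (3:ℝ) ≤ (n:ℝ)+3 := by
        have : (0:ℝ) ≤ n := Nat.cast_nonneg n
        linarith
      -- second term nonneg
      have h2 : 0 ≤ - (1 - p n) * Real.logb 2 (1 - p n) := by
        have h1 : Real.logb 2 (1 - p n) ≤ 0 :=
          Real.logb_nonpos (by norm_num) (by linarith [hphalf n]) (by linarith [hp0 n])
        have : 0 ≤ 1 - p n := by linarith [hphalf n]
        nlinarith
      -- first term bound: -log (p n) ≥ log (n+3)
      have hub : p n ≤ 1 / ((n:ℝ)+3) := by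
        have : p n = ε / (((n:ℝ)+3) * (Real.log ((n:ℝ)+3))^2) := by
          simp [hp, qq, div_eq_mul_inv, mul_comm]
        rw [this]
        rw [div_le_div_iff₀ (by nlinarith) (by linarith)]
        have hsq : 1 ≤ Real.log ((n:ℝ)+3)^2 := by nlinarith
        calc ε * ((n:ℝ)+3) ≤ 1 * ((n:ℝ)+3) := by nlinarith
          _ ≤ 1 * (((n:ℝ)+3) * Real.log ((n:ℝ)+3)^2) := by nlinarith
      have hlogp : Real.log (p n) ≤ - Real.log ((n:ℝ)+3) := by
        have := Real.log_le_log (hp0 n) hub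
        rwa [one_div, Real.log_inv] at this
      have h1 : c * rr n ≤ - p n * Real.logb 2 (p n) := by
        rw [Real.logb, hc]
        have hrr : rr n = qq n * Real.log ((n:ℝ)+3) := (qq_mul_log n).symm
        rw [hrr]
        have hq := qq_pos n
        have : - p n * (Real.log (p n) / Real.log 2) = p n * (- Real.log (p n)) / Real.log 2 := by
          ring
        rw [this]
        rw [div_mul_eq_mul_div, div_le_div_iff₀ hlog2 hlog2]
        have hb : ε * (qq n * Real.log ((n:ℝ)+3)) ≤ p n * (- Real.log (p n)) := by
          have : p n * Real.log ((n:ℝ)+3) ≤ p n * (- Real.log (p n)) :=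
            mul_le_mul_of_nonneg_left (by linarith) (hp0 n).le
          calc ε * (qq n * Real.log ((n:ℝ)+3)) = p n * Real.log ((n:ℝ)+3) := by rw [hp]; ring
            _ ≤ p n * (- Real.log (p n)) := this
        nlinarith
      linarith
    have hnonneg : ∀ n, 0 ≤ c * rr n := fun n => (mul_pos hc0 (rr_pos n)).le
    have hsum2 : Summable (fun n => c * rr n) := Summable.of_nonneg_of_le hnonneg hkey hS
    have : Summable rr := by
      have := hsum2.mul_left c⁻¹
      simpa [← mul_assoc, inv_mul_cancel₀ hc0.ne', one_mul] using this
    exact rr_not_summable this
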